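/- Let T be a spanning tree of a finite connected graph G, and let c be the number of connected components of a spanning forest F of G whose edge set is contained in that of G. If F is a spanning forest of G with c components and ℓ leaves, then G has a spanning tree with at least ℓ − 2(c − 1) leaves. -/

import Mathlib

/-- `T` is a spanning tree of `G`: a subgraph on all vertices that is a tree. -/
def IsSpanningTreeOf {V : Type*} (T G : SimpleGraph V) : Prop := T ≤ G ∧ T.IsTree

/-- The set of leaves (vertices of degree 1) of a graph. -/
def leafSet {V : Type*} (T : SimpleGraph V) : Set V := {v | (T.neighborSet v).ncard = 1}

/-- The number of leaves of a graph. -/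
noncomputable def numLeaves {V : Type*} (T : SimpleGraph V) : ℕ := (leafSet T).ncard

open SimpleGraph

/-- Along a `G`-walk between two `F`-unreachable vertices there is a `G`-edge whose
endpoints are `F`-unreachable. -/
lemma cross_edge_aux {V : Type*} {G F : SimpleGraph V} {u v : V} (w : G.Walk u v) :
    ¬F.Reachable u v → ∃ a b, G.Adj a b ∧ ¬F.Reachable a b := by
  induction w with
  | nil => intro h; exact absurd (Reachable.refl _) h
  | @cons a b c hadj p ih =>
    intro h
    by_cases hr : F.Reachable a b
    · exact ih (fun hx => h (hr.trans hx))
    · exact ⟨a, b, hadj, hr⟩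

/-- Adding an edge between two different components preserves acyclicity. -/
lemma isAcyclic_sup_edge_aux {V : Type*} {F : SimpleGraph V} (hF : F.IsAcyclic) {a b : V}
    (hne : a ≠ b) (hnr : ¬F.Reachable a b) : (F ⊔ edge a b).IsAcyclic := by
  have hnadj : ¬F.Adj a b := fun h => hnr h.reachable
  have hdel : (F ⊔ edge a b) \ fromEdgeSet {s(a, b)} = F := by
    ext v w
    simp only [sdiff_adj, sup_adj, edge_adj, fromEdgeSet_adj, Set.mem_singleton_iff, Sym2.eq_iff]
    constructor
    · rintro ⟨h1 | h2, h3⟩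
      · exact h1
      · exact absurd ⟨h2.1, h2.2⟩ h3
    · intro h
      refine ⟨Or.inl h, ?_⟩
      rintro ⟨⟨rfl, rfl⟩ | ⟨rfl, rfl⟩, _⟩
      exacts [hnadj h, hnadj h.symm]
  have hadj' : (F ⊔ edge a b).Adj a b := by
    rw [sup_adj, edge_adj]
    exact Or.inr ⟨Or.inl ⟨rfl, rfl⟩, hne⟩
  have hbridge : (F ⊔ edge a b).IsBridge s(a, b) := by
    rw [isBridge_iff, deleteEdges, hdel]
    exact hnr
  intro v c hc
  by_cases he : s(a, b) ∈ c.edges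
  · exact (isBridge_iff_mem_and_forall_cycle_notMem (c.edges_subset_edgeSet he)).mp hbridge c hc he
  · have hsub : ∀ e ∈ c.edges, e ∈ F.edgeSet := by
      intro e hme
      have hmem := c.edges_subset_edgeSet hme
      rw [edgeSet_sup] at hmem
      rcases hmem with h1 | h2
      · exact h1
      · rw [edge_edgeSet_of_ne hne, Set.mem_singleton_iff] at h2
        exact absurd (h2 ▸ hme) he
    exact hF (c.transfer F hsub) (hc.transfer hsub)

/-- Adding one edge destroys at most two leaves. -/
lemma numLeaves_sup_edge_aux {V : Type*} [Fintype V] (F : SimpleGraph V) (a b : V) :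
    numLeaves F ≤ numLeaves (F ⊔ edge a b) + 2 := by
  have hsub : leafSet F ⊆ leafSet (F ⊔ edge a b) ∪ {a, b} := by
    intro v hv
    by_cases ha : v = a
    · right; simp [ha]
    by_cases hb : v = b
    · right; simp [hb]
    left
    have hns : (F ⊔ edge a b).neighborSet v = F.neighborSet v := by
      ext w
      simp only [mem_neighborSet, sup_adj, edge_adj]
      constructor
      · rintro (h | ⟨⟨rfl, rfl⟩ | ⟨rfl, rfl⟩, _⟩)
        · exact h
        · exact absurd rfl ha
        · exact absurd rfl hb
      · exact Or.inl
    simpa only [leafSet, Set.mem_setOf_eq, hns] using hv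
  calc numLeaves F ≤ (leafSet (F ⊔ edge a b) ∪ {a, b}).ncard :=
        Set.ncard_le_ncard hsub (Set.toFinite _)
    _ ≤ numLeaves (F ⊔ edge a b) + ({a, b} : Set V).ncard := Set.ncard_union_le _ _
    _ ≤ numLeaves (F ⊔ edge a b) + 2 := by
        gcongr
        calc ({a, b} : Set V).ncard ≤ ({b} : Set V).ncard + 1 := Set.ncard_insert_le _ _
          _ ≤ 2 := by rw [Set.ncard_singleton]

lemma spanning_forest_to_tree_aux {V : Type*} [Fintype V] :
    ∀ (n : ℕ) (G F : SimpleGraph V), G.Connected → F ≤ G → F.IsAcyclic →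
      Nat.card F.ConnectedComponent = n →
      ∃ T : SimpleGraph V, IsSpanningTreeOf T G ∧ numLeaves F ≤ numLeaves T + 2 * (n - 1) := by
  intro n
  induction n using Nat.strong_induction_on with
  | _ n ih =>
    intro G F hG hFG hF hn
    by_cases hconn : ∀ u v : V, F.Reachable u v
    · have hVne : Nonempty V := hG.nonempty
      exact ⟨F, ⟨hFG, ⟨Connected.mk hconn, hF⟩⟩, Nat.le_add_right _ _⟩
    · push_neg at hconn
      obtain ⟨u, v, huv⟩ := hconn
      obtain ⟨w⟩ := hG.preconnected u v
      obtain ⟨a, b, hab, hnr⟩ := cross_edge_aux w huv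
      have hne : a ≠ b := hab.ne
      set F' := F ⊔ edge a b with hF'def
      have hF'G : F' ≤ G := by
        apply sup_le hFG
        intro x y hxy
        rw [edge_adj] at hxy
        rcases hxy.1 with ⟨rfl, rfl⟩ | ⟨rfl, rfl⟩
        · exact hab
        · exact hab.symm
      have hF' : F'.IsAcyclic := isAcyclic_sup_edge_aux hF hne hnr
      have hFfin : Finite F.ConnectedComponent := Quot.finite _
      have hF'fin : Finite F'.ConnectedComponent := Quot.finite _
      have hVne : Nonempty V := hG.nonempty
      have hF'ne : Nonempty F'.ConnectedComponent :=
        ⟨F'.connectedComponentMk (Classical.arbitrary V)⟩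
      set φ : F.ConnectedComponent → F'.ConnectedComponent :=
        ConnectedComponent.map (Hom.ofLE le_sup_left) with hφ
      have hsurj : Function.Surjective φ := by
        intro C
        refine C.ind (fun x => ⟨F.connectedComponentMk x, ?_⟩)
        simp [hφ, ConnectedComponent.map_mk]
      have hninj : ¬Function.Injective φ := by
        intro hinj
        apply hnr
        have hadj' : F'.Adj a b := by
          rw [hF'def, sup_adj, edge_adj]
          exact Or.inr ⟨Or.inl ⟨rfl, rfl⟩, hne⟩
        have heq : φ (F.connectedComponentMk a) = φ (F.connectedComponentMk b) := by
          simp only [hφ, ConnectedComponent.map_mk]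
          exact ConnectedComponent.connectedComponentMk_eq_of_adj hadj'
        exact ConnectedComponent.eq.mp (hinj heq)
      have hm : Nat.card F'.ConnectedComponent < n := by
        rw [← hn]
        by_contra hle
        push_neg at hle
        exact hninj (hsurj.bijective_of_nat_card_le hle).injective
      have hm1 : 1 ≤ Nat.card F'.ConnectedComponent := Nat.card_pos
      obtain ⟨T, hT, hle⟩ := ih _ hm G F' hG hF'G hF' rfl
      have hL : numLeaves F ≤ numLeaves F' + 2 := numLeaves_sup_edge_aux F a b
      exact ⟨T, hT, by omega⟩

/-- If `F` is a spanning forest of a finite connected graph `G` with `c` components and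
`ℓ` leaves, then `G` has a spanning tree with at least `ℓ − 2(c − 1)` leaves. -/
theorem spanning_forest_to_tree {V : Type*} [Fintype V] (G F : SimpleGraph V)
    (hG : G.Connected) (hFG : F ≤ G) (hF : F.IsAcyclic) (c ℓ : ℕ)
    (hc : c = Nat.card F.ConnectedComponent) (hl : ℓ = numLeaves F) :
    ∃ T : SimpleGraph V, IsSpanningTreeOf T G ∧ ℓ ≤ numLeaves T + 2 * (c - 1) := by
  subst hc hl
  exact spanning_forest_to_tree_aux _ G F hG hFG hF rfl
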